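/- As t → 0⁺, t²·φ_eff(t) converges to 1/(6π); that is, φ_eff(t) ∼ (1/(2t²))·∫_{−∞}^∞ V as t → 0, where the even extension of V satisfies ∫_{−∞}^∞ V = 1/(3π). -/

import Mathlib

open Real Filter MeasureTheory

open Set


lemma ipe (n : ℕ) {b : ℝ} (hb : 0 < b) :
    ∫ x in Ioi (0:ℝ), x ^ n * Real.exp (-(b * x)) = n.factorial / b ^ (n + 1) := by
  have h := Real.integral_rpow_mul_exp_neg_mul_Ioi (a := (n:ℝ)+1) (by positivity) hb
  rw [show ((n:ℝ)+1) = ((n+1 : ℕ) : ℝ) by push_cast; ring] at h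
  rw [show ((n+1:ℕ):ℝ) = (n:ℝ)+1 by push_cast; ring] at h
  rw [Real.Gamma_nat_eq_factorial] at h
  rw [show ((n:ℝ)+1) = ((n+1 : ℕ) : ℝ) by push_cast; ring, Real.rpow_natCast] at h
  rw [show (∫ x in Ioi (0:ℝ), x ^ n * Real.exp (-(b * x)))
      = ∫ t in Ioi (0:ℝ), t ^ (((n+1:ℕ):ℝ) - 1) * Real.exp (-(b * t)) from
    setIntegral_congr_fun measurableSet_Ioi (fun x hx => by
      rw [show (((n+1:ℕ):ℝ) - 1) = (n:ℝ) by push_cast; ring, Real.rpow_natCast]), h]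
  rw [one_div, inv_pow, div_eq_mul_inv, mul_comm]

lemma ipe_int (n : ℕ) {b : ℝ} (hb : 0 < b) :
    IntegrableOn (fun x : ℝ => x ^ n * Real.exp (-(b * x))) (Ioi 0) := by
  have h := integrableOn_rpow_mul_exp_neg_mul_rpow (p := 1) (s := (n:ℝ)) (b := b)
    (lt_of_lt_of_le (by norm_num) (Nat.cast_nonneg n)) one_pos hb
  refine h.congr_fun (fun x hx => ?_) measurableSet_Ioi
  beta_reduce
  rw [Real.rpow_one, Real.rpow_natCast, neg_mul]

lemma basel' : HasSum (fun n : ℕ => 1 / ((n:ℝ)+1) ^ 2) (Real.pi ^ 2 / 6) := by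
  have h := (hasSum_nat_add_iff' (f := fun n : ℕ => (1:ℝ)/(n:ℝ)^2) 1).mpr hasSum_zeta_two
  simpa using h

lemma geom_shift {r : ℝ} (h0 : 0 ≤ r) (h1 : r < 1) :
    HasSum (fun n : ℕ => ((n:ℝ)+1) * r ^ (n+1)) (r / (1 - r) ^ 2) := by
  have h := hasSum_coe_mul_geometric_of_norm_lt_one (𝕜 := ℝ) (r := r)
    (by rwa [Real.norm_eq_abs, abs_of_nonneg h0])
  have h2 := (hasSum_nat_add_iff' (f := fun n : ℕ => (n:ℝ) * r ^ n) 1).mpr h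
  simpa using h2

lemma geom_shift' {r : ℝ} (h0 : 0 ≤ r) (h1 : r < 1) :
    HasSum (fun n : ℕ => r ^ (n+1)) (r / (1 - r)) := by
  have h := (hasSum_geometric_of_lt_one h0 h1).mul_left r
  have : (fun n : ℕ => r * r ^ n) = fun n : ℕ => r ^ (n+1) := by
    funext n; rw [pow_succ]; ring
  rw [this] at h
  rw [div_eq_mul_inv]
  exact h
lemma one_sub_r {x : ℝ} :
    1 - Real.exp (-(2*Real.pi*x)) = 2 * Real.exp (-(Real.pi*x)) * Real.sinh (Real.pi*x) := by
  rw [Real.sinh_eq,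
    show 2 * Real.exp (-(Real.pi*x)) * ((Real.exp (Real.pi*x) - Real.exp (-(Real.pi*x)))/2)
      = Real.exp (-(Real.pi*x) + Real.pi*x) - Real.exp (-(Real.pi*x) + -(Real.pi*x)) from by
        rw [Real.exp_add, Real.exp_add]; ring]
  rw [show -(Real.pi*x) + Real.pi*x = 0 from by ring,
    show -(Real.pi*x) + -(Real.pi*x) = -(2*Real.pi*x) from by ring, Real.exp_zero]

lemma one_add_r {x : ℝ} :
    1 + Real.exp (-(2*Real.pi*x)) = 2 * Real.exp (-(Real.pi*x)) * Real.cosh (Real.pi*x) := by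
  rw [Real.cosh_eq,
    show 2 * Real.exp (-(Real.pi*x)) * ((Real.exp (Real.pi*x) + Real.exp (-(Real.pi*x)))/2)
      = Real.exp (-(Real.pi*x) + Real.pi*x) + Real.exp (-(Real.pi*x) + -(Real.pi*x)) from by
        rw [Real.exp_add, Real.exp_add]; ring]
  rw [show -(Real.pi*x) + Real.pi*x = 0 from by ring,
    show -(Real.pi*x) + -(Real.pi*x) = -(2*Real.pi*x) from by ring, Real.exp_zero]

lemma r_lt_one {x : ℝ} (hx : 0 < x) : Real.exp (-(2*Real.pi*x)) < 1 := by
  rw [Real.exp_lt_one_iff]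
  nlinarith [Real.pi_pos]

lemma gg_eq {x : ℝ} (hx : 0 < x) :
    x^2 / Real.sinh (Real.pi*x)^2
      = 4*x^2*(Real.exp (-(2*Real.pi*x)) / (1 - Real.exp (-(2*Real.pi*x)))^2) := by
  have hS : Real.sinh (Real.pi*x) ≠ 0 :=
    ne_of_gt (by rw [Real.sinh_pos_iff]; positivity)
  have e2 : Real.exp (-(2*Real.pi*x)) = Real.exp (-(Real.pi*x)) * Real.exp (-(Real.pi*x)) := by
    rw [← Real.exp_add]; congr 1; ring
  rw [one_sub_r, e2]
  have hE : Real.exp (-(Real.pi*x)) ≠ 0 := Real.exp_ne_zero _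
  field_simp
  ring

lemma gser {x : ℝ} (hx : 0 < x) :
    HasSum (fun n : ℕ => (4*((n:ℝ)+1)) * (x^2 * Real.exp (-(2*Real.pi*((n:ℝ)+1)*x))))
      (x^2 / Real.sinh (Real.pi*x)^2) := by
  set r := Real.exp (-(2*Real.pi*x)) with hrdef
  have hr0 : (0:ℝ) ≤ r := (Real.exp_pos _).le
  have hr1 : r < 1 := r_lt_one hx
  have h := (geom_shift hr0 hr1).mul_left (4*x^2)
  have hterm : (fun n : ℕ => 4*x^2*(((n:ℝ)+1) * r^(n+1)))
      = fun n : ℕ => (4*((n:ℝ)+1)) * (x^2 * Real.exp (-(2*Real.pi*((n:ℝ)+1)*x))) := by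
    funext n
    have e : r^(n+1) = Real.exp (-(2*Real.pi*((n:ℝ)+1)*x)) := by
      rw [hrdef, ← Real.exp_nat_mul]
      congr 1; push_cast; ring
    rw [e]; ring
  rw [hterm] at h
  rw [gg_eq hx]
  exact h

lemma rexp_pow {x : ℝ} (n : ℕ) :
    Real.exp (-(2*Real.pi*x))^(n+1) = Real.exp (-(2*Real.pi*((n:ℝ)+1)*x)) := by
  rw [← Real.exp_nat_mul]; congr 1; push_cast; ring

lemma vser {x : ℝ} (hx : 0 < x) :
    HasSum (fun n : ℕ => (2*x/Real.pi + 1/(Real.pi^2*((n:ℝ)+1)))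
        * Real.exp (-(2*Real.pi*((n:ℝ)+1)*x)))
      ((1/Real.pi)*x*(Real.cosh (Real.pi*x)/Real.sinh (Real.pi*x))
        - (1/Real.pi^2)*Real.log (2*Real.sinh (Real.pi*x))) := by
  set r := Real.exp (-(2*Real.pi*x)) with hrdef
  have hr0 : (0:ℝ) ≤ r := (Real.exp_pos _).le
  have hr1 : r < 1 := r_lt_one hx
  have hr1' : (1:ℝ) - r ≠ 0 := by linarith
  have hr1'' : (0:ℝ) < 1 - r := by linarith
  have hS : (0:ℝ) < Real.sinh (Real.pi*x) := by rw [Real.sinh_pos_iff]; positivity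
  have hE : Real.exp (-(Real.pi*x)) ≠ 0 := Real.exp_ne_zero _
  have hpi := Real.pi_pos
  have h1 := (geom_shift' hr0 hr1).mul_left (2*x/Real.pi)
  have h2 := (hasSum_pow_div_log_of_abs_lt_one
    (x := r) (by rwa [abs_of_nonneg hr0])).mul_left (1/Real.pi^2)
  have h := h1.add h2
  have hterm : (fun n : ℕ => 2*x/Real.pi * r^(n+1) + 1/Real.pi^2 * (r^(n+1)/((n:ℝ)+1)))
      = fun n : ℕ => (2*x/Real.pi + 1/(Real.pi^2*((n:ℝ)+1)))
          * Real.exp (-(2*Real.pi*((n:ℝ)+1)*x)) := by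
    funext n
    rw [← rexp_pow n, ← hrdef]
    have : ((n:ℝ)+1) ≠ 0 := by positivity
    field_simp
  have hterm' : ∀ n : ℕ, ((n:ℝ)+1) = (((n+1:ℕ)):ℝ) := by intro n; push_cast; ring
  rw [hterm] at h
  refine (congrArg (HasSum _) ?_).mpr h
  -- value equality
  have hcs : Real.cosh (Real.pi*x) / Real.sinh (Real.pi*x) = (1+r)/(1-r) := by
    rw [hrdef] at *
    rw [one_sub_r, one_add_r]
    field_simp
  have hlog : Real.log (2*Real.sinh (Real.pi*x)) = Real.pi*x + Real.log (1-r) := by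
    have h2s : 2*Real.sinh (Real.pi*x) = (1-r) * Real.exp (Real.pi*x) := by
      rw [hrdef, one_sub_r]
      rw [show 2 * Real.exp (-(Real.pi*x)) * Real.sinh (Real.pi*x) * Real.exp (Real.pi*x)
        = (Real.exp (-(Real.pi*x)) * Real.exp (Real.pi*x)) * (2*Real.sinh (Real.pi*x)) from by ring,
        ← Real.exp_add]
      rw [show -(Real.pi*x) + Real.pi*x = 0 from by ring, Real.exp_zero, one_mul]
    rw [h2s, Real.log_mul hr1' (Real.exp_ne_zero _), Real.log_exp]
    ring
  rw [hcs, hlog]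
  field_simp
  ring

lemma intFn (n : ℕ) :
    ∫ x in Ioi (0:ℝ), (4*((n:ℝ)+1)) * (x^2 * Real.exp (-(2*Real.pi*((n:ℝ)+1)*x)))
      = 1/(Real.pi^3*((n:ℝ)+1)^2) := by
  have hb : (0:ℝ) < 2*Real.pi*((n:ℝ)+1) := by positivity
  rw [MeasureTheory.integral_const_mul, ipe 2 hb]
  have hpi := Real.pi_pos
  have h1 : ((n:ℝ)+1) ≠ 0 := by positivity
  field_simp
  ring

lemma gIntegral :
    ∫ x in Ioi (0:ℝ), x^2 / Real.sinh (Real.pi*x)^2 = 1/(6*Real.pi) := by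
  set F : ℕ → ℝ → ℝ :=
    fun n x => (4*((n:ℝ)+1)) * (x^2 * Real.exp (-(2*Real.pi*((n:ℝ)+1)*x))) with hF
  have hbn : ∀ n : ℕ, (0:ℝ) < 2*Real.pi*((n:ℝ)+1) := fun n => by positivity
  have hint : ∀ n : ℕ, Integrable (F n) (volume.restrict (Ioi 0)) := by
    intro n
    exact (ipe_int 2 (hbn n)).const_mul (4*((n:ℝ)+1))
  have hval : ∀ n : ℕ, (∫ x in Ioi (0:ℝ), F n x) = 1/(Real.pi^3*((n:ℝ)+1)^2) := intFn
  have hnorm : ∀ n : ℕ, (∫ x in Ioi (0:ℝ), ‖F n x‖) = 1/(Real.pi^3*((n:ℝ)+1)^2) := by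
    intro n
    rw [← hval n]
    refine setIntegral_congr_fun measurableSet_Ioi (fun x hx => ?_)
    rw [Real.norm_eq_abs, abs_of_nonneg (by simp only [hF]; positivity)]
  have hbasel : Summable fun n : ℕ => 1/(Real.pi^3*((n:ℝ)+1)^2) := by
    refine (basel'.mul_left ((1:ℝ)/Real.pi^3)).summable.congr (fun n => ?_)
    rw [div_mul_div_comm, one_mul]
  have hsum : Summable fun n : ℕ => ∫ x in Ioi (0:ℝ), ‖F n x‖ := by
    rw [funext hnorm]; exact hbasel
  have heq : ∫ x in Ioi (0:ℝ), x^2 / Real.sinh (Real.pi*x)^2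
      = ∫ x in Ioi (0:ℝ), ∑' n, F n x :=
    setIntegral_congr_fun measurableSet_Ioi (fun x hx => ((gser hx).tsum_eq).symm)
  rw [heq, ← MeasureTheory.integral_tsum_of_summable_integral_norm hint hsum]
  calc ∑' n, ∫ x in Ioi (0:ℝ), F n x = ∑' n : ℕ, 1/(Real.pi^3*((n:ℝ)+1)^2) :=
        tsum_congr hval
    _ = 1/(6*Real.pi) := by
        have hs := basel'.mul_left ((1:ℝ)/Real.pi^3)
        have e : (fun n : ℕ => (1:ℝ)/Real.pi^3 * (1/((n:ℝ)+1)^2))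
            = fun n : ℕ => 1/(Real.pi^3*((n:ℝ)+1)^2) := by
          funext n; rw [div_mul_div_comm, one_mul]
        rw [e] at hs
        rw [hs.tsum_eq]
        have hpi := Real.pi_pos
        field_simp

lemma intF2 (n : ℕ) :
    ∫ x in Ioi (0:ℝ), (2*x/Real.pi + 1/(Real.pi^2*((n:ℝ)+1)))
        * Real.exp (-(2*Real.pi*((n:ℝ)+1)*x))
      = 1/(Real.pi^3*((n:ℝ)+1)^2) := by
  have hb : (0:ℝ) < 2*Real.pi*((n:ℝ)+1) := by positivity
  have hpi := Real.pi_pos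
  have h1 : ((n:ℝ)+1) ≠ 0 := by positivity
  have e : (fun x : ℝ => (2*x/Real.pi + 1/(Real.pi^2*((n:ℝ)+1)))
        * Real.exp (-(2*Real.pi*((n:ℝ)+1)*x)))
      = fun x : ℝ => (2/Real.pi) * (x^1 * Real.exp (-(2*Real.pi*((n:ℝ)+1)*x)))
        + (1/(Real.pi^2*((n:ℝ)+1))) * (x^0 * Real.exp (-(2*Real.pi*((n:ℝ)+1)*x))) := by
    funext x; rw [pow_one, pow_zero]; ring
  rw [e, MeasureTheory.integral_add ((ipe_int 1 hb).const_mul _) ((ipe_int 0 hb).const_mul _),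
    MeasureTheory.integral_const_mul, MeasureTheory.integral_const_mul, ipe 1 hb, ipe 0 hb]
  simp only [Nat.factorial_one, Nat.factorial_zero, Nat.cast_one]
  field_simp
  ring

lemma f2Integral :
    ∫ x in Ioi (0:ℝ), ((1/Real.pi)*x*(Real.cosh (Real.pi*x)/Real.sinh (Real.pi*x))
        - (1/Real.pi^2)*Real.log (2*Real.sinh (Real.pi*x))) = 1/(6*Real.pi) := by
  set F : ℕ → ℝ → ℝ := fun n x => (2*x/Real.pi + 1/(Real.pi^2*((n:ℝ)+1)))
    * Real.exp (-(2*Real.pi*((n:ℝ)+1)*x)) with hF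
  have hbn : ∀ n : ℕ, (0:ℝ) < 2*Real.pi*((n:ℝ)+1) := fun n => by positivity
  have hpi := Real.pi_pos
  have hint : ∀ n : ℕ, Integrable (F n) (volume.restrict (Ioi 0)) := by
    intro n
    have h := (((ipe_int 1 (hbn n)).const_mul (2/Real.pi)).add
      ((ipe_int 0 (hbn n)).const_mul (1/(Real.pi^2*((n:ℝ)+1)))))
    refine (IntegrableOn.congr_fun h (fun x hx => ?_) measurableSet_Ioi : _)
    simp only [hF, pow_one, pow_zero, Pi.add_apply]; ring
  have hval : ∀ n : ℕ, (∫ x in Ioi (0:ℝ), F n x) = 1/(Real.pi^3*((n:ℝ)+1)^2) := intF2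
  have hnorm : ∀ n : ℕ, (∫ x in Ioi (0:ℝ), ‖F n x‖) = 1/(Real.pi^3*((n:ℝ)+1)^2) := by
    intro n
    rw [← hval n]
    refine setIntegral_congr_fun measurableSet_Ioi (fun x hx => ?_)
    have hx' : (0:ℝ) < x := hx
    rw [Real.norm_eq_abs, abs_of_nonneg (by simp only [hF]; positivity)]
  have hbasel : Summable fun n : ℕ => 1/(Real.pi^3*((n:ℝ)+1)^2) := by
    refine (basel'.mul_left ((1:ℝ)/Real.pi^3)).summable.congr (fun n => ?_)
    rw [div_mul_div_comm, one_mul]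
  have hsum : Summable fun n : ℕ => ∫ x in Ioi (0:ℝ), ‖F n x‖ := by
    rw [funext hnorm]; exact hbasel
  have heq : ∫ x in Ioi (0:ℝ), ((1/Real.pi)*x*(Real.cosh (Real.pi*x)/Real.sinh (Real.pi*x))
        - (1/Real.pi^2)*Real.log (2*Real.sinh (Real.pi*x)))
      = ∫ x in Ioi (0:ℝ), ∑' n, F n x :=
    setIntegral_congr_fun measurableSet_Ioi (fun x hx => ((vser hx).tsum_eq).symm)
  rw [heq, ← MeasureTheory.integral_tsum_of_summable_integral_norm hint hsum]
  calc ∑' n, ∫ x in Ioi (0:ℝ), F n x = ∑' n : ℕ, 1/(Real.pi^3*((n:ℝ)+1)^2) :=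
        tsum_congr hval
    _ = 1/(6*Real.pi) := by
        have hs := basel'.mul_left ((1:ℝ)/Real.pi^3)
        have e : (fun n : ℕ => (1:ℝ)/Real.pi^3 * (1/((n:ℝ)+1)^2))
            = fun n : ℕ => 1/(Real.pi^3*((n:ℝ)+1)^2) := by
          funext n; rw [div_mul_div_comm, one_mul]
        rw [e] at hs
        rw [hs.tsum_eq]
        field_simp

lemma sinh_le_mul_cosh {y : ℝ} (hy : 0 ≤ y) : Real.sinh y ≤ y * Real.cosh y := by
  have key : ∀ z : ℝ, HasDerivAt (fun w => w * Real.cosh w - Real.sinh w) (z * Real.sinh z) z := by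
    intro z
    have h := ((hasDerivAt_id z).mul (Real.hasDerivAt_cosh z)).sub (Real.hasDerivAt_sinh z)
    refine (congrArg (HasDerivAt _ · z) ?_).mpr h
    simp only [id_eq]
    ring
  have mono : MonotoneOn (fun w => w * Real.cosh w - Real.sinh w) (Icc 0 y) := by
    apply monotoneOn_of_deriv_nonneg (convex_Icc 0 y)
    · exact ((continuous_id.mul Real.continuous_cosh).sub Real.continuous_sinh).continuousOn
    · intro z _; exact ((key z).differentiableAt).differentiableWithinAt
    · intro z hz
      rw [interior_Icc] at hz
      rw [(key z).deriv]
      exact mul_nonneg hz.1.le (Real.sinh_nonneg_iff.mpr hz.1.le)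
  have h0 := mono (left_mem_Icc.mpr hy) (right_mem_Icc.mpr hy) hy
  simp only [Real.cosh_zero, Real.sinh_zero, zero_mul, sub_zero] at h0
  linarith

lemma gg_anti {a b : ℝ} (ha : 0 < a) (hab : a ≤ b) :
    b^2/Real.sinh (Real.pi*b)^2 ≤ a^2/Real.sinh (Real.pi*a)^2 := by
  have hpi := Real.pi_pos
  have hb : 0 < b := lt_of_lt_of_le ha hab
  have hpa : 0 < Real.pi * a := by positivity
  have hpb : 0 < Real.pi * b := by positivity
  have hSa : 0 < Real.sinh (Real.pi*a) := Real.sinh_pos_iff.mpr hpa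
  have hSb : 0 < Real.sinh (Real.pi*b) := Real.sinh_pos_iff.mpr hpb
  have mono : MonotoneOn (fun y => Real.sinh y / y) (Icc (Real.pi*a) (Real.pi*b)) := by
    apply monotoneOn_of_deriv_nonneg (convex_Icc _ _)
    · exact Real.continuous_sinh.continuousOn.div continuousOn_id
        (fun y hy => ne_of_gt (lt_of_lt_of_le hpa hy.1))
    · intro y hy
      rw [interior_Icc] at hy
      have hy0 : (0:ℝ) < y := lt_trans hpa hy.1
      have hder : HasDerivAt (fun y : ℝ => Real.sinh y / y)
          ((Real.cosh y * y - Real.sinh y * 1)/y^2) y :=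
        (Real.hasDerivAt_sinh y).div (hasDerivAt_id y) (ne_of_gt hy0)
      exact hder.differentiableAt.differentiableWithinAt
    · intro y hy
      rw [interior_Icc] at hy
      have hy0 : (0:ℝ) < y := lt_trans hpa hy.1
      have hder : HasDerivAt (fun y : ℝ => Real.sinh y / y)
          ((Real.cosh y * y - Real.sinh y * 1)/y^2) y :=
        (Real.hasDerivAt_sinh y).div (hasDerivAt_id y) (ne_of_gt hy0)
      rw [hder.deriv]
      have := sinh_le_mul_cosh hy0.le
      apply div_nonneg _ (sq_nonneg y)
      nlinarith
  have hv := mono (left_mem_Icc.mpr (by nlinarith)) (right_mem_Icc.mpr (by nlinarith))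
    (by nlinarith)
  rw [div_le_div_iff₀ hpa hpb] at hv
  rw [div_le_div_iff₀ (by positivity) (by positivity)]
  have H := mul_le_mul hv hv (by positivity) (by positivity)
  have H3 : Real.pi^2 * (b^2 * Real.sinh (Real.pi*a)^2)
      ≤ Real.pi^2 * (a^2 * Real.sinh (Real.pi*b)^2) := by nlinarith [H]
  exact le_of_mul_le_mul_left H3 (by positivity)

lemma gg_le {x : ℝ} (hx : 0 < x) : x^2/Real.sinh (Real.pi*x)^2 ≤ 1/Real.pi^2 := by
  have hpi := Real.pi_pos
  have h : Real.pi * x < Real.sinh (Real.pi*x) := Real.self_lt_sinh_iff.mpr (by positivity)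
  have h2 : (Real.pi*x)^2 ≤ Real.sinh (Real.pi*x)^2 := by nlinarith [mul_pos hpi hx]
  calc x^2/Real.sinh (Real.pi*x)^2 ≤ x^2/(Real.pi*x)^2 :=
        div_le_div_of_nonneg_left (sq_nonneg x) (by positivity) h2
    _ = 1/Real.pi^2 := by rw [mul_pow]; field_simp

noncomputable def gbar (x : ℝ) : ℝ :=
  if x ≤ 0 then 1/Real.pi^2 else x^2/Real.sinh (Real.pi*x)^2

lemma gbar_eq {x : ℝ} (hx : 0 < x) : gbar x = x^2/Real.sinh (Real.pi*x)^2 :=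
  if_neg (not_le.mpr hx)

lemma gbar_nonneg (x : ℝ) : 0 ≤ gbar x := by
  unfold gbar
  split
  · positivity
  · positivity

lemma gbar_anti : AntitoneOn gbar (Ici 0) := by
  intro a ha b hb hab
  by_cases hb0 : b ≤ 0
  · have ha0 : a ≤ 0 := le_trans hab hb0
    rw [gbar, gbar, if_pos ha0, if_pos hb0]
  · push_neg at hb0
    rw [gbar_eq hb0]
    by_cases ha0 : 0 < a
    · rw [gbar_eq ha0]; exact gg_anti ha0 hab
    · push_neg at ha0
      rw [gbar, if_pos ha0]
      exact gg_le hb0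

lemma gg_meas : Measurable (fun x : ℝ => x^2/Real.sinh (Real.pi*x)^2) := by
  apply Measurable.div
  · exact (measurable_id.pow_const 2)
  · exact ((Real.continuous_sinh.comp (continuous_const.mul continuous_id)).measurable.pow_const 2)

lemma gg_integrable : IntegrableOn (fun x : ℝ => x^2/Real.sinh (Real.pi*x)^2) (Ioi 0) := by
  have h1 : IntegrableOn (fun x : ℝ => x^2/Real.sinh (Real.pi*x)^2) (Ioc 0 1) := by
    refine Measure.integrableOn_of_bounded (M := 1/Real.pi^2) ?_ ?_ ?_
    · rw [Real.volume_Ioc]; exact ENNReal.ofReal_ne_top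
    · exact gg_meas.aestronglyMeasurable
    · refine (ae_restrict_iff' measurableSet_Ioc).mpr (ae_of_all _ (fun x hx => ?_))
      rw [Real.norm_eq_abs, abs_of_nonneg (by positivity)]
      exact gg_le hx.1
  have h2 : IntegrableOn (fun x : ℝ => x^2/Real.sinh (Real.pi*x)^2) (Ioi 1) := by
    have hc : (0:ℝ) < 1 - Real.exp (-(2*Real.pi)) := by
      have := r_lt_one (x := 1) one_pos
      simp only [mul_one] at this
      linarith
    have hmaj0 : IntegrableOn
        (fun x : ℝ => (4/(1-Real.exp (-(2*Real.pi)))^2) * (x^2*Real.exp (-(2*Real.pi*x))))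
        (Ioi 0) := (ipe_int 2 Real.two_pi_pos).const_mul _
    have hmaj := hmaj0.mono_set (Ioi_subset_Ioi zero_le_one)
    refine Integrable.mono' hmaj gg_meas.aestronglyMeasurable ?_
    refine (ae_restrict_iff' measurableSet_Ioi).mpr (ae_of_all _ (fun x hx => ?_))
    have hx1 : (1:ℝ) < x := hx
    have hx0 : (0:ℝ) < x := by linarith
    rw [Real.norm_eq_abs, abs_of_nonneg (by positivity), gg_eq hx0]
    have hrx : Real.exp (-(2*Real.pi*x)) ≤ Real.exp (-(2*Real.pi)) := by
      apply Real.exp_le_exp.mpr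
      nlinarith [Real.pi_pos]
    have hrx1 : 0 < 1 - Real.exp (-(2*Real.pi*x)) := sub_pos.mpr (r_lt_one hx0)
    have hd : (1-Real.exp (-(2*Real.pi)))^2 ≤ (1-Real.exp (-(2*Real.pi*x)))^2 := by nlinarith
    have hdiv : Real.exp (-(2*Real.pi*x)) / (1-Real.exp (-(2*Real.pi*x)))^2
        ≤ Real.exp (-(2*Real.pi*x)) / (1-Real.exp (-(2*Real.pi)))^2 :=
      div_le_div_of_nonneg_left (Real.exp_pos _).le (by positivity) hd
    calc 4*x^2*(Real.exp (-(2*Real.pi*x)) / (1-Real.exp (-(2*Real.pi*x)))^2)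
        ≤ 4*x^2*(Real.exp (-(2*Real.pi*x)) / (1-Real.exp (-(2*Real.pi)))^2) := by
          apply mul_le_mul_of_nonneg_left hdiv (by positivity)
      _ = (4/(1-Real.exp (-(2*Real.pi)))^2) * (x^2*Real.exp (-(2*Real.pi*x))) := by ring
  rw [← Ioc_union_Ioi_eq_Ioi (zero_le_one : (0:ℝ) ≤ 1)]
  exact h1.union h2

lemma part1 :
    Tendsto (fun t : ℝ => ∑' k : ℕ, t * gbar (t*((k:ℝ)+1)))
      (nhdsWithin 0 (Set.Ioi 0)) (nhds (1/(6*Real.pi))) := by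
  have hpi := Real.pi_pos
  set I : ℝ := ∫ x in Ioi (0:ℝ), x^2/Real.sinh (Real.pi*x)^2 with hI
  have hIv : I = 1/(6*Real.pi) := gIntegral
  have hGanti : ∀ t : ℝ, 0 < t → AntitoneOn (fun y : ℝ => t * gbar (t*y)) (Ici 0) := by
    intro t ht a ha b hb hab
    exact mul_le_mul_of_nonneg_left
      (gbar_anti (mem_Ici.mpr (by rw [mem_Ici] at ha; positivity))
        (mem_Ici.mpr (by rw [mem_Ici] at hb; positivity))
        (mul_le_mul_of_nonneg_left hab ht.le)) ht.le
  have hggnn : ∀ᵐ (x:ℝ) ∂(volume.restrict (Ioi (0:ℝ))),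
      0 ≤ x^2/Real.sinh (Real.pi*x)^2 :=
    ae_of_all _ (fun x => by positivity)
  -- upper bound
  have upper : ∀ t : ℝ, 0 < t → ∀ n : ℕ,
      ∑ i ∈ Finset.range n, t * gbar (t*((i:ℝ)+1)) ≤ I := by
    intro t ht n
    have h1 := AntitoneOn.sum_le_integral (f := fun y : ℝ => t * gbar (t*y))
      (x₀ := (0:ℝ)) (a := n) ((hGanti t ht).mono (Icc_subset_Ici_self))
    simp only [zero_add, Nat.cast_add, Nat.cast_one] at h1
    refine le_trans h1 ?_
    rw [intervalIntegral.integral_const_mul, ← smul_eq_mul,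
      intervalIntegral.smul_integral_comp_mul_left gbar t, mul_zero]
    have hn0 : (0:ℝ) ≤ t * n := by positivity
    rw [intervalIntegral.integral_of_le hn0]
    have h3 : ∫ x in Ioc (0:ℝ) (t*(n:ℝ)), gbar x
        = ∫ x in Ioc (0:ℝ) (t*(n:ℝ)), x^2/Real.sinh (Real.pi*x)^2 :=
      setIntegral_congr_fun measurableSet_Ioc (fun x hx => gbar_eq hx.1)
    rw [h3]
    exact setIntegral_mono_set gg_integrable hggnn
      (HasSubset.Subset.eventuallyLE Ioc_subset_Ioi_self)
  have hnn : ∀ t : ℝ, 0 < t → ∀ k : ℕ, 0 ≤ t * gbar (t*((k:ℝ)+1)) :=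
    fun t ht k => mul_nonneg ht.le (gbar_nonneg _)
  have hsummable : ∀ t : ℝ, 0 < t → Summable (fun k : ℕ => t * gbar (t*((k:ℝ)+1))) :=
    fun t ht => summable_of_sum_range_le (hnn t ht) (upper t ht)
  have tsum_le : ∀ t : ℝ, 0 < t → ∑' k : ℕ, t * gbar (t*((k:ℝ)+1)) ≤ I :=
    fun t ht => (hsummable t ht).tsum_le_of_sum_range_le (upper t ht)
  -- lower bound
  have tsum_ge : ∀ t : ℝ, 0 < t → I - t*(1/Real.pi^2) ≤ ∑' k : ℕ, t * gbar (t*((k:ℝ)+1)) := by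
    intro t ht
    have lower_n : ∀ n : ℕ, ∫ x in Ioc t (t*(1+(n:ℝ))), x^2/Real.sinh (Real.pi*x)^2
        ≤ ∑ i ∈ Finset.range n, t * gbar (t*((i:ℝ)+1)) := by
      intro n
      have h1 := AntitoneOn.integral_le_sum (f := fun y : ℝ => t * gbar (t*y))
        (x₀ := (1:ℝ)) (a := n)
        ((hGanti t ht).mono (fun y hy => le_trans zero_le_one hy.1))
      rw [intervalIntegral.integral_const_mul, ← smul_eq_mul,
        intervalIntegral.smul_integral_comp_mul_left gbar t, mul_one] at h1
      have hn0 : t ≤ t * (1+(n:ℝ)) := by nlinarith [Nat.cast_nonneg (α := ℝ) n]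
      rw [intervalIntegral.integral_of_le hn0] at h1
      have h3 : ∫ x in Ioc t (t*(1+(n:ℝ))), gbar x
          = ∫ x in Ioc t (t*(1+(n:ℝ))), x^2/Real.sinh (Real.pi*x)^2 :=
        setIntegral_congr_fun measurableSet_Ioc (fun x hx => gbar_eq (lt_trans ht hx.1))
      rw [h3] at h1
      refine le_trans h1 (le_of_eq (Finset.sum_congr rfl (fun i _ => ?_)))
      rw [add_comm (1:ℝ) (i:ℝ)]
    have tendsto_int : Tendsto (fun n : ℕ => ∫ x in Ioc t (t*(1+(n:ℝ))),
        x^2/Real.sinh (Real.pi*x)^2) atTop (nhds (∫ x in Ioi t, x^2/Real.sinh (Real.pi*x)^2)) := by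
      have hsm : ∀ n : ℕ, MeasurableSet (Ioc t (t*(1+(n:ℝ)))) := fun n => measurableSet_Ioc
      have hmono : Monotone (fun n : ℕ => Ioc t (t*(1+(n:ℝ)))) := by
        intro m n hmn
        apply Ioc_subset_Ioc_right
        have : (m:ℝ) ≤ (n:ℝ) := Nat.cast_le.mpr hmn
        nlinarith
      have hU : (⋃ n : ℕ, Ioc t (t*(1+(n:ℝ)))) = Ioi t := by
        ext x
        simp only [mem_iUnion, mem_Ioc, mem_Ioi]
        constructor
        · rintro ⟨n, h1, _⟩; exact h1
        · intro hx
          obtain ⟨n, hn⟩ := exists_nat_ge (x/t)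
          refine ⟨n, hx, ?_⟩
          rw [div_le_iff₀ ht] at hn
          nlinarith
      have h := tendsto_setIntegral_of_monotone hsm hmono
        (by rw [hU]; exact gg_integrable.mono_set (Ioi_subset_Ioi ht.le))
      rwa [hU] at h
    have hge : ∫ x in Ioi t, x^2/Real.sinh (Real.pi*x)^2
        ≤ ∑' k : ℕ, t * gbar (t*((k:ℝ)+1)) := by
      refine le_of_tendsto tendsto_int (Filter.Eventually.of_forall (fun n => ?_))
      exact le_trans (lower_n n)
        (Summable.sum_le_tsum (Finset.range n) (fun k _ => hnn t ht k) (hsummable t ht))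
    have hsplit : I = (∫ x in Ioc (0:ℝ) t, x^2/Real.sinh (Real.pi*x)^2)
        + ∫ x in Ioi t, x^2/Real.sinh (Real.pi*x)^2 := by
      rw [hI, ← Ioc_union_Ioi_eq_Ioi ht.le]
      rw [setIntegral_union (Ioc_disjoint_Ioi le_rfl) measurableSet_Ioi
        (gg_integrable.mono_set Ioc_subset_Ioi_self)
        (gg_integrable.mono_set (Ioi_subset_Ioi ht.le))]
    have hsmall : ∫ x in Ioc (0:ℝ) t, x^2/Real.sinh (Real.pi*x)^2 ≤ t * (1/Real.pi^2) := by
      have h5 : ∫ x in Ioc (0:ℝ) t, x^2/Real.sinh (Real.pi*x)^2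
          ≤ ∫ _x in Ioc (0:ℝ) t, (1/Real.pi^2 : ℝ) := by
        refine setIntegral_mono_on (gg_integrable.mono_set Ioc_subset_Ioi_self)
          ((integrableOn_const_iff (C := (1/Real.pi^2 : ℝ))).mpr (Or.inr ?_)) measurableSet_Ioc
          (fun x hx => gg_le hx.1)
        rw [Real.volume_Ioc]; exact ENNReal.ofReal_lt_top
      rw [setIntegral_const, Real.volume_real_Ioc_of_le ht.le, sub_zero,
        smul_eq_mul] at h5
      exact h5
    linarith
  -- squeeze
  have hlo : Tendsto (fun t : ℝ => I - t*(1/Real.pi^2))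
      (nhdsWithin 0 (Set.Ioi 0)) (nhds (1/(6*Real.pi))) := by
    have h0 : Tendsto (fun t : ℝ => I - t*(1/Real.pi^2)) (nhds (0:ℝ))
        (nhds (I - 0*(1/Real.pi^2))) :=
      Tendsto.sub tendsto_const_nhds (Tendsto.mul tendsto_id tendsto_const_nhds)
    have h := h0.mono_left (nhdsWithin_le_nhds (s := Set.Ioi (0:ℝ)))
    simp only [zero_mul, sub_zero] at h
    rw [hIv] at h ⊢
    exact h
  have hhi : Tendsto (fun _t : ℝ => I) (nhdsWithin 0 (Set.Ioi 0)) (nhds (1/(6*Real.pi))) := by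
    rw [hIv]; exact tendsto_const_nhds
  refine tendsto_of_tendsto_of_tendsto_of_le_of_le' hlo hhi ?_ ?_
  · exact Filter.eventually_of_mem self_mem_nhdsWithin (fun t ht => tsum_ge t ht)
  · exact Filter.eventually_of_mem self_mem_nhdsWithin (fun t ht => tsum_le t ht)

/-- The wall-interaction force `φ(s) = s / sinh²(πs)`. -/
noncomputable def phi (s : ℝ) : ℝ := s / (Real.sinh (Real.pi * s)) ^ 2

/-- The even extension to `ℝ` of the wall-interaction energy
`V(s) = (1/π)·s·coth(πs) − (1/π²)·log(2·sinh(πs))` (`s > 0`). -/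
noncomputable def Vext (s : ℝ) : ℝ :=
  (1 / Real.pi) * |s| * (Real.cosh (Real.pi * |s|) / Real.sinh (Real.pi * |s|))
    - (1 / Real.pi ^ 2) * Real.log (2 * Real.sinh (Real.pi * |s|))

/-- As `t → 0⁺`, `t²·φ_eff(t) → 1/(6π)`, i.e. `φ_eff(t) ∼ (1/(2t²))·∫_{−∞}^∞ V` as
`t → 0`, where the even extension of `V` satisfies `∫_{−∞}^∞ V = 1/(3π)`. -/
theorem stmt10 :
    Tendsto (fun t : ℝ => t ^ 2 * ∑' k : ℕ, ((k : ℝ) + 1) * phi (((k : ℝ) + 1) * t))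
      (nhdsWithin 0 (Set.Ioi 0)) (nhds (1 / (6 * Real.pi))) ∧
    (∫ s : ℝ, Vext s) = 1 / (3 * Real.pi) := by
  constructor
  · refine Tendsto.congr' ?_ part1
    refine Filter.eventuallyEq_of_mem self_mem_nhdsWithin (fun t ht => ?_)
    have ht0 : (0:ℝ) < t := ht
    have h1 : t ^ 2 * ∑' k : ℕ, ((k : ℝ) + 1) * phi (((k : ℝ) + 1) * t)
        = ∑' k : ℕ, t ^ 2 * (((k : ℝ) + 1) * phi (((k : ℝ) + 1) * t)) :=
      tsum_mul_left.symm
    rw [h1]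
    refine tsum_congr (fun k => ?_)
    have hk : (0:ℝ) < t*((k:ℝ)+1) := by positivity
    rw [gbar_eq hk, mul_comm t ((k:ℝ)+1)]
    unfold phi
    ring
  · have h : (∫ s : ℝ, Vext s) = 2 * ∫ x in Ioi (0:ℝ),
        ((1/Real.pi)*x*(Real.cosh (Real.pi*x)/Real.sinh (Real.pi*x))
          - (1/Real.pi^2)*Real.log (2*Real.sinh (Real.pi*x))) :=
      integral_comp_abs (f := fun x : ℝ =>
        (1/Real.pi)*x*(Real.cosh (Real.pi*x)/Real.sinh (Real.pi*x))
          - (1/Real.pi^2)*Real.log (2*Real.sinh (Real.pi*x)))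
    rw [h, f2Integral]
    have hpi := Real.pi_ne_zero
    field_simp
    ring
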